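/- Key Lemma: Let m ≥ n, σ : ℝ → ℝ be a bijective, continuous, strictly increasing function, σ̂ : ℝ^n → ℝ^n its componentwise extension, W ∈ ℝ^{m×n} of full rank n, b ∈ ℝ^n, and f(x) = σ̂(Wᵀx + b). If V ⊆ ℝ^n is open and connected, then f⁻¹(V) ⊆ ℝ^m is open and connected. -/

import Mathlib

open Matrix Pointwise
theorem key_lemma {m n : ℕ} (hmn : n ≤ m) (σ : ℝ → ℝ)
    (hbij : Function.Bijective σ) (hcont : Continuous σ) (hmono : StrictMono σ)
    (W : Matrix (Fin m) (Fin n) ℝ) (hrank : W.rank = n) (b : Fin n → ℝ)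
    (V : Set (Fin n → ℝ)) (hVopen : IsOpen V) (hVconn : IsConnected V) :
    IsOpen ((fun x : Fin m → ℝ => fun i => σ ((Wᵀ.mulVec x + b) i)) ⁻¹' V) ∧
    IsConnected ((fun x : Fin m → ℝ => fun i => σ ((Wᵀ.mulVec x + b) i)) ⁻¹' V) := by
  -- σ as a homeomorphism of ℝ
  have hσ : Homeomorph ℝ ℝ := (hmono.orderIsoOfSurjective σ hbij.2).toHomeomorph
  set e : Homeomorph ℝ ℝ := (hmono.orderIsoOfSurjective σ hbij.2).toHomeomorph with he
  have heσ : (e : ℝ → ℝ) = σ := rfl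
  -- componentwise homeomorphism
  set E : Homeomorph (Fin n → ℝ) (Fin n → ℝ) := Homeomorph.piCongrRight (fun _ => e) with hE
  have hEapp : ∀ y : Fin n → ℝ, E y = fun i => σ (y i) := fun y => rfl
  -- the affine map
  set A : (Fin m → ℝ) →ₗ[ℝ] (Fin n → ℝ) := Wᵀ.mulVecLin with hA
  set T : (Fin m → ℝ) → (Fin n → ℝ) := fun x => A x + b with hT
  have hfactor : ((fun x : Fin m → ℝ => fun i => σ ((Wᵀ.mulVec x + b) i)) ⁻¹' V)
      = T ⁻¹' (E ⁻¹' V) := rfl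
  set U : Set (Fin n → ℝ) := E ⁻¹' V with hU
  have hUopen : IsOpen U := E.continuous.isOpen_preimage V hVopen
  have hUconn : IsConnected U := by
    have : U = E.symm '' V := by
      rw [hU, ← Homeomorph.image_symm]
    rw [this]
    exact hVconn.image _ E.symm.continuous.continuousOn
  have hTcont : Continuous T := by
    exact (A.continuous_of_finiteDimensional).add continuous_const
  constructor
  · rw [hfactor]
    exact hUopen.preimage hTcont
  · rw [hfactor]
    -- A is surjective
    have hsurj : Function.Surjective A := by
      rw [← LinearMap.range_eq_top]
      apply Submodule.eq_top_of_finrank_eq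
      have : Wᵀ.rank = n := by rw [Matrix.rank_transpose, hrank]
      rw [Matrix.rank] at this
      simp [this, Module.finrank_pi]
      exact this
    obtain ⟨g, hg⟩ := A.exists_rightInverse_of_surjective (LinearMap.range_eq_top.2 hsurj)
    have hgA : ∀ y, A (g y) = y := fun y => congrFun (congrArg DFunLike.coe hg) y
    -- preimage as image of U ×ˢ ker A
    have key : T ⁻¹' U =
        (fun p : (Fin n → ℝ) × (Fin m → ℝ) => g (p.1 - b) + p.2) '' (U ×ˢ (LinearMap.ker A : Set (Fin m → ℝ))) := by
      ext x
      constructor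
      · intro hx
        refine ⟨⟨A x + b, x - g (A x)⟩, ⟨hx, ?_⟩, ?_⟩
        · simp [LinearMap.mem_ker, map_sub, hgA]
        · simp only [add_sub_cancel_right]
          abel
      · rintro ⟨⟨u, k⟩, ⟨hu, hk⟩, rfl⟩
        have hk' : A k = 0 := hk
        simp only [Set.mem_preimage, hT, map_add, hgA, hk']
        simpa using hu
    rw [key]
    apply IsConnected.image
    · exact hUconn.prod ⟨⟨0, Submodule.zero_mem _⟩,
        ((LinearMap.ker A).convex.isConnected ⟨0, Submodule.zero_mem _⟩).isPreconnected⟩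
    · exact (((g.continuous_of_finiteDimensional).comp
        (continuous_fst.sub continuous_const)).add continuous_snd).continuousOn
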